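/- Every n-dimensional null-filiform Leibniz algebra over the complex numbers is isomorphic to NF_n, the algebra with basis e_1,...,e_n and multiplication [e_i,e_1] = e_{i+1} for 1 ≤ i ≤ n-1. -/

import Mathlib

/-- A (right) Leibniz algebra over a field `F`. -/
structure LeibnizAlgebra (F : Type*) [Field F] (L : Type*) [AddCommGroup L] [Module F L] where
  bracket : L →ₗ[F] L →ₗ[F] L
  leibniz : ∀ x y z : L,
    bracket x (bracket y z) = bracket (bracket x y) z - bracket (bracket x z) y

namespace LeibnizAlgebra

variable {F : Type*} [Field F] {L : Type*} [AddCommGroup L] [Module F L]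

/-- The subspace spanned by all brackets `[a,b]` with `a ∈ I`, `b ∈ J`. -/
def bracketSub (A : LeibnizAlgebra F L) (I J : Submodule F L) : Submodule F L :=
  Submodule.span F {z : L | ∃ a ∈ I, ∃ b ∈ J, z = A.bracket a b}

/-- A (two-sided) ideal of a Leibniz algebra. -/
def IsIdeal (A : LeibnizAlgebra F L) (I : Submodule F L) : Prop :=
  ∀ x a : L, a ∈ I → A.bracket x a ∈ I ∧ A.bracket a x ∈ I

/-- `lcsPow A I k` is `I^{k+1}`, where `I^1 = I` and `I^{k+1} = [I^k, I]`. -/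
def lcsPow (A : LeibnizAlgebra F L) (I : Submodule F L) : ℕ → Submodule F L
  | 0 => I
  | k + 1 => A.bracketSub (A.lcsPow I k) I

/-- `derPow A I s` is `I^{[s+1]}`, where `I^{[1]} = I` and `I^{[s+1]} = [I^{[s]}, I^{[s]}]`. -/
def derPow (A : LeibnizAlgebra F L) (I : Submodule F L) : ℕ → Submodule F L
  | 0 => I
  | s + 1 => A.bracketSub (A.derPow I s) (A.derPow I s)

end LeibnizAlgebra

/-- Coordinate of `u` at a natural-number index, zero out of range. -/
def cf {m : ℕ} (u : Fin m → ℂ) (j : ℕ) : ℂ := if h : j < m then u ⟨j, h⟩ else 0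

/-- The bracket of `NF_n`: `[e_i, e_1] = e_{i+1}` for `1 ≤ i ≤ n-1`, all other products of
basis vectors zero. -/
def nfBracket (n : ℕ) (u v : Fin n → ℂ) : Fin n → ℂ :=
  fun k => if 1 ≤ (k : ℕ) then cf u ((k : ℕ) - 1) * cf v 0 else 0

lemma cf_add {m : ℕ} (u v : Fin m → ℂ) (j : ℕ) : cf (u + v) j = cf u j + cf v j := by
  unfold cf; split <;> simp

lemma cf_smul {m : ℕ} (c : ℂ) (u : Fin m → ℂ) (j : ℕ) : cf (c • u) j = c * cf u j := by
  unfold cf; split <;> simp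

/-- `nfBracket` as a bilinear map. -/
noncomputable def nfB (n : ℕ) : (Fin n → ℂ) →ₗ[ℂ] (Fin n → ℂ) →ₗ[ℂ] (Fin n → ℂ) :=
  LinearMap.mk₂ ℂ (nfBracket n)
    (fun u₁ u₂ v => by
      funext k
      simp only [nfBracket, Pi.add_apply, cf_add]
      split <;> ring)
    (fun c u v => by
      funext k
      simp only [nfBracket, Pi.smul_apply, smul_eq_mul, cf_smul]
      split <;> ring)
    (fun u v₁ v₂ => by
      funext k
      simp only [nfBracket, Pi.add_apply, cf_add]
      split <;> ring)
    (fun c u v => by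
      funext k
      simp only [nfBracket, Pi.smul_apply, smul_eq_mul, cf_smul]
      split <;> ring)

open LeibnizAlgebra in
/-- Every `n`-dimensional null-filiform complex Leibniz algebra is isomorphic to `NF_n`. -/
theorem nullFiliform_iso_NF
    {L : Type*} [AddCommGroup L] [Module ℂ L] [FiniteDimensional ℂ L]
    (A : LeibnizAlgebra ℂ L) (n : ℕ) (hdim : Module.finrank ℂ L = n)
    (hnf : ∀ i : ℕ, 1 ≤ i → i ≤ n + 1 →
      Module.finrank ℂ ↥(A.lcsPow ⊤ (i - 1)) = n + 1 - i) :
    ∃ e : L ≃ₗ[ℂ] (Fin n → ℂ), ∀ a b : L,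
      e (A.bracket a b) = nfBracket n (e a) (e b) := by
  classical
  rcases Nat.eq_zero_or_pos n with hn0 | hn
  · subst hn0
    refine ⟨LinearEquiv.ofFinrankEq L (Fin 0 → ℂ) (by simp [hdim]), fun a b => ?_⟩
    exact Subsingleton.elim _ _
  -- notation
  set K : ℕ → Submodule ℂ L := A.lcsPow ⊤ with hKdefn
  have hKdef : ∀ k, K (k + 1) = A.bracketSub (K k) ⊤ := fun k => rfl
  have hmemB : ∀ {I J : Submodule ℂ L} {a b : L}, a ∈ I → b ∈ J →
      A.bracket a b ∈ A.bracketSub I J := fun ha hb => Submodule.subset_span ⟨_, ha, _, hb, rfl⟩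
  have hBmono : ∀ {I I' J J' : Submodule ℂ L}, I ≤ I' → J ≤ J' →
      A.bracketSub I J ≤ A.bracketSub I' J' := by
    intro I I' J J' hI hJ
    apply Submodule.span_mono
    rintro z ⟨a, ha, b, hb, rfl⟩
    exact ⟨a, hI ha, b, hJ hb, rfl⟩
  have hKsucc : ∀ k, K (k + 1) ≤ K k := by
    intro k
    induction k with
    | zero => exact le_top
    | succ k ih => exact hBmono ih le_rfl
  have hKanti : ∀ {a b : ℕ}, a ≤ b → K b ≤ K a := fun {a b} h =>
    antitone_nat_of_succ_le hKsucc h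
  have hKrank : ∀ k, k ≤ n → Module.finrank ℂ (K k) = n - k := by
    intro k hk
    have h := hnf (k + 1) (by omega) (by omega)
    simpa using h
  have hKbot : K n = ⊥ := by
    have h := hKrank n le_rfl
    simp only [Nat.sub_self] at h
    exact Submodule.finrank_eq_zero.mp h
  have hKne : ∀ k, k < n → K (k + 1) < K k := by
    intro k hk
    refine lt_of_le_of_ne (hKsucc k) ?_
    intro he
    have h1 := hKrank k (by omega)
    have h2 := hKrank (k + 1) (by omega)
    rw [he] at h2
    omega
  obtain ⟨x0, -, hx0⟩ := SetLike.exists_of_lt (hKne 0 hn)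
  set f : L → L := fun y => A.bracket y x0 with hfdef
  set e : ℕ → L := fun k => f^[k] x0 with hedef
  have he0 : e 0 = x0 := rfl
  have heS : ∀ k, e (k + 1) = A.bracket (e k) x0 := fun k => Function.iterate_succ_apply' f k x0
  have heK : ∀ k, e k ∈ K k := by
    intro k
    induction k with
    | zero => exact Submodule.mem_top
    | succ k ih =>
      rw [heS, hKdef]
      exact hmemB ih Submodule.mem_top
  -- [K^k, K^1] ⊆ K^{k+2}
  have h6 : ∀ k, ∀ x ∈ K k, ∀ y ∈ K 1, A.bracket x y ∈ K (k + 2) := by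
    intro k x hx y hy
    have hsub : K 1 ≤ (K (k + 2)).comap (A.bracket x) := by
      rw [hKdef 0]
      apply Submodule.span_le.mpr
      rintro z ⟨a, -, b, -, rfl⟩
      simp only [SetLike.mem_coe, Submodule.mem_comap]
      rw [A.leibniz]
      refine sub_mem ?_ ?_
      · rw [hKdef (k + 1)]
        exact hmemB (by rw [hKdef k]; exact hmemB hx Submodule.mem_top) Submodule.mem_top
      · rw [hKdef (k + 1)]
        exact hmemB (by rw [hKdef k]; exact hmemB hx Submodule.mem_top) Submodule.mem_top
    exact hsub hy
  -- base decomposition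
  have hP0 : (⊤ : Submodule ℂ L) = (ℂ ∙ e 0) ⊔ K 1 := by
    have hlt : K 1 < (ℂ ∙ e 0) ⊔ K 1 := by
      refine lt_of_le_of_ne le_sup_right ?_
      intro hEq
      apply hx0
      have h0 : e 0 ∈ (ℂ ∙ e 0) ⊔ K 1 :=
        Submodule.mem_sup_left (Submodule.mem_span_singleton_self _)
      rw [← hEq] at h0
      exact h0
    have h1 : Module.finrank ℂ (K 1) = n - 1 := hKrank 1 hn
    have h2 : Module.finrank ℂ ((ℂ ∙ e 0) ⊔ K 1 : Submodule ℂ L) ≤ n := by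
      rw [← hdim]
      exact Submodule.finrank_le _
    have h3 := Submodule.finrank_lt_finrank_of_lt hlt
    refine (Submodule.eq_top_of_finrank_eq ?_).symm
    rw [hdim]
    omega
  -- key decomposition K^k = ⟨e_k⟩ ⊕ K^{k+1}
  have hP : ∀ k, k < n → K k = (ℂ ∙ e k) ⊔ K (k + 1) := by
    intro k
    induction k with
    | zero => intro _; exact hP0
    | succ k ih =>
      intro hk1
      have hIH := ih (by omega)
      apply le_antisymm
      · rw [hKdef k]
        apply Submodule.span_le.mpr
        rintro z ⟨a, ha, b, -, rfl⟩
        rw [hIH] at ha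
        obtain ⟨y, hy, z', hz', rfl⟩ := Submodule.mem_sup.mp ha
        obtain ⟨c, rfl⟩ := Submodule.mem_span_singleton.mp hy
        have hb : b ∈ (ℂ ∙ e 0) ⊔ K 1 := by rw [← hP0]; exact Submodule.mem_top
        obtain ⟨w, hw, b', hb', rfl⟩ := Submodule.mem_sup.mp hb
        obtain ⟨d, rfl⟩ := Submodule.mem_span_singleton.mp hw
        have expand : A.bracket (c • e k + z') (d • e 0 + b')
            = (c * d) • A.bracket (e k) (e 0) + c • A.bracket (e k) b'
              + A.bracket z' (d • e 0 + b') := by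
          simp only [map_add, map_smul, LinearMap.add_apply, LinearMap.smul_apply, smul_smul]
          module
        simp only [SetLike.mem_coe]
        rw [expand]
        refine add_mem (add_mem ?_ ?_) ?_
        · apply Submodule.mem_sup_left
          rw [he0, ← heS k]
          exact Submodule.smul_mem _ _ (Submodule.mem_span_singleton_self _)
        · exact Submodule.mem_sup_right
            (Submodule.smul_mem _ _ (h6 k (e k) (heK k) b' hb'))
        · apply Submodule.mem_sup_right
          rw [hKdef (k + 1)]
          exact hmemB hz' Submodule.mem_top
      · refine sup_le ?_ (hKsucc (k + 1))
        exact (Submodule.span_singleton_le_iff_mem _ _).mpr (heK (k + 1))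
  have heNot : ∀ k, k < n → e k ∉ K (k + 1) := by
    intro k hk hin
    have heq : K k = K (k + 1) := by
      rw [hP k hk]
      exact sup_eq_right.mpr ((Submodule.span_singleton_le_iff_mem _ _).mpr hin)
    exact (hKne k hk).ne heq.symm
  -- linear independence
  set v : Fin n → L := fun i => e i.val with hvdef
  have hli : LinearIndependent ℂ v := by
    rw [Fintype.linearIndependent_iff]
    intro g hg
    suffices H : ∀ m : ℕ, ∀ i : Fin n, i.val = m → g i = 0 by
      intro i; exact H i.val i rfl
    intro m
    induction m using Nat.strong_induction_on with
    | _ m IH =>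
      intro i him
      by_contra hgi
      have hzero : ∀ j : Fin n, j.val < i.val → g j = 0 := fun j hj =>
        IH j.val (him ▸ hj) j rfl
      have hsum : ∑ j ∈ Finset.univ.filter (fun j : Fin n => i.val ≤ j.val), g j • v j = 0 := by
        rw [Finset.sum_subset (Finset.filter_subset _ _)]
        · exact hg
        · intro x _ hx
          simp only [Finset.mem_filter, Finset.mem_univ, true_and, not_le] at hx
          rw [hzero x hx, zero_smul]
      have hsplit : Finset.univ.filter (fun j : Fin n => i.val ≤ j.val)
          = insert i (Finset.univ.filter (fun j : Fin n => i.val < j.val)) := by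
        ext j
        simp only [Finset.mem_filter, Finset.mem_univ, true_and, Finset.mem_insert, Fin.ext_iff]
        omega
      rw [hsplit, Finset.sum_insert (by simp)] at hsum
      have hmem : g i • v i ∈ K (i.val + 1) := by
        have heq : g i • v i
            = -∑ j ∈ Finset.univ.filter (fun j : Fin n => i.val < j.val), g j • v j :=
          eq_neg_of_add_eq_zero_left hsum
        rw [heq]
        refine neg_mem (Submodule.sum_mem _ fun j hj => Submodule.smul_mem _ _ ?_)
        simp only [Finset.mem_filter, Finset.mem_univ, true_and] at hj
        exact hKanti (by omega) (heK j.val)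
      have hvi : v i ∈ K (i.val + 1) := by
        have h := Submodule.smul_mem _ (g i)⁻¹ hmem
        rwa [smul_smul, inv_mul_cancel₀ hgi, one_smul] at h
      exact heNot i.val i.isLt hvi
  have : Nonempty (Fin n) := ⟨⟨0, hn⟩⟩
  set B := basisOfLinearIndependentOfCardEqFinrank hli (by simp [hdim]) with hBdef
  have hB : ∀ i, B i = v i := fun i =>
    congrFun (coe_basisOfLinearIndependentOfCardEqFinrank hli (by simp [hdim])) i
  -- everything brackets to zero against e_{j} for j ≥ 1
  have hz : ∀ j : ℕ, ∀ x : L, A.bracket x (e (j + 1)) = 0 := by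
    intro j
    induction j with
    | zero =>
      intro x
      rw [heS 0, A.leibniz]
      exact sub_self _
    | succ j IH =>
      intro x
      rw [heS (j + 1), A.leibniz, IH x, IH (A.bracket x x0)]
      simp
  -- the key computation on basis vectors
  set eqv := B.equivFun with heqv
  have key : ∀ i j : Fin n,
      eqv (A.bracket (B i) (B j)) = nfBracket n (eqv (B i)) (eqv (B j)) := by
    intro i j
    rcases Nat.eq_zero_or_pos j.val with hj0 | hj1
    · -- j = e_0 column
      have hj : j = ⟨0, hn⟩ := Fin.ext hj0
      have hbr : A.bracket (B i) (B j) = e (i.val + 1) := by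
        rw [hB i, hB j, hvdef]
        simp only [hj]
        rw [he0]
        exact (heS _).symm
      rcases Nat.lt_or_ge (i.val + 1) n with hi1 | hi2
      · -- e_{i+1} is a basis vector
        have hbr2 : A.bracket (B i) (B j) = B ⟨i.val + 1, hi1⟩ := by
          rw [hbr, hB ⟨i.val + 1, hi1⟩]
        rw [hbr2]
        funext k
        rw [heqv]
        rw [Module.Basis.equivFun_self, nfBracket]
        have hc0 : cf (B.equivFun (B j)) 0 = 1 := by
          unfold cf
          rw [dif_pos hn, Module.Basis.equivFun_self, if_pos]
          exact hj
        rw [hc0, mul_one]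
        by_cases hk : 1 ≤ (k : ℕ)
        · rw [if_pos hk]
          have hkn : (k : ℕ) - 1 < n := by omega
          unfold cf
          rw [dif_pos hkn, Module.Basis.equivFun_self]
          have : (⟨i.val + 1, hi1⟩ : Fin n) = k ↔ i = ⟨(k : ℕ) - 1, hkn⟩ := by
            simp only [Fin.ext_iff, Fin.val_mk]
            omega
          by_cases hik : i = ⟨(k : ℕ) - 1, hkn⟩
          · rw [if_pos (this.mpr hik), if_pos hik]
          · rw [if_neg (fun h => hik (this.mp h)), if_neg hik]
        · rw [if_neg hk]
          rw [if_neg]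
          intro h
          apply hk
          simp only [Fin.ext_iff, Fin.val_mk] at h
          
          omega
      · -- e_{i+1} = e_n = 0
        have hieq : i.val + 1 = n := by omega
        have hbr2 : A.bracket (B i) (B j) = 0 := by
          rw [hbr, hieq]
          have := heK (i.val + 1)
          rw [hieq, hKbot, Submodule.mem_bot] at this
          exact this
        rw [hbr2, map_zero]
        funext k
        rw [nfBracket]
        simp only [Pi.zero_apply]
        by_cases hk : 1 ≤ (k : ℕ)
        · rw [if_pos hk]
          have hkn : (k : ℕ) - 1 < n := by omega
          have : cf (eqv (B i)) ((k : ℕ) - 1) = 0 := by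
            unfold cf
            rw [dif_pos hkn, heqv, Module.Basis.equivFun_self, if_neg]
            intro h
            have hkl := k.isLt
            simp only [Fin.ext_iff, Fin.val_mk] at h
            omega
          rw [this, zero_mul]
        · rw [if_neg hk]
    · -- j ≥ 1 column: bracket is zero
      have hbr : A.bracket (B i) (B j) = 0 := by
        rw [hB i, hB j, hvdef]
        simp only
        rw [show (j : ℕ) = ((j : ℕ) - 1) + 1 by omega]
        exact hz _ _
      rw [hbr, map_zero]
      funext k
      rw [nfBracket]
      simp only [Pi.zero_apply]
      have hc0 : cf (eqv (B j)) 0 = 0 := by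
        unfold cf
        rw [dif_pos hn, heqv, Module.Basis.equivFun_self, if_neg]
        intro h
        simp only [Fin.ext_iff, Fin.val_mk] at h
        omega
      rw [hc0, mul_zero]
      split <;> rfl
  -- package as bilinear maps and conclude
  set F : L →ₗ[ℂ] L →ₗ[ℂ] (Fin n → ℂ) := A.bracket.compr₂ eqv.toLinearMap with hF
  set G : L →ₗ[ℂ] L →ₗ[ℂ] (Fin n → ℂ) :=
    ((nfB n).comp eqv.toLinearMap).compl₂ eqv.toLinearMap with hG
  have hFG : F = G := by
    apply B.ext
    intro i
    apply B.ext
    intro j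
    show eqv (A.bracket (B i) (B j)) = nfBracket n (eqv (B i)) (eqv (B j))
    exact key i j
  refine ⟨eqv, fun a b => ?_⟩
  have h := LinearMap.congr_fun (LinearMap.congr_fun hFG a) b
  exact h
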